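/- Let n ≥ 1. There exists a constant c₁ > 0 depending only on n with the following property: for every smooth, strictly convex body K in ℝ^{n+1} with positive support function, the normalized body K̄ = (K − c(K))/(⨍ h̃ dθ) satisfies h_{K̄}(x) ≤ 1/c₁ for all x ∈ S^n; in particular the diameter of K̄ ∪ B is at most 2(1 + 1/c₁), where B is the closed unit ball. -/

import Mathlib

open MeasureTheory Metric Real
open scoped InnerProductSpace ENNReal Topology

noncomputable section

/-- Euclidean space `ℝ^{n+1}`. -/
abbrev Eu (n : ℕ) : Type := EuclideanSpace ℝ (Fin (n + 1))

/-- The unit sphere `S^n ⊆ ℝ^{n+1}` as a subtype. -/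
abbrev Sph (n : ℕ) : Type := Metric.sphere (0 : Eu n) 1

/-- The spherical Lebesgue (surface) measure on `S^n`. -/
def sphMeas (n : ℕ) : Measure (Sph n) := (volume : Measure (Eu n)).toSphere

/-- The support function of a set `K ⊆ ℝ^{n+1}`. -/
def sfn {n : ℕ} (K : Set (Eu n)) (z : Eu n) : ℝ :=
  sSup ((fun y => ⟪z, y⟫_ℝ) '' K)

/-- The Hessian endomorphism `A(x) = D(∇ h_K)(x)`. -/
def hessA {n : ℕ} (K : Set (Eu n)) (x : Eu n) : Eu n →L[ℝ] Eu n :=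
  fderiv ℝ (gradient (sfn K)) x

/-- The rank-one endomorphism `x ⊗ x : v ↦ ⟨v, x⟩ x`. -/
def tens {n : ℕ} (x : Eu n) : Eu n →L[ℝ] Eu n :=
  (innerSL ℝ x).smulRight x

/-- `det (A(x) + x ⊗ x)`, the reciprocal Gauss curvature `1/𝒦` at `x ∈ S^n`. -/
def rK {n : ℕ} (K : Set (Eu n)) (x : Eu n) : ℝ :=
  LinearMap.det ((hessA K x + tens x : Eu n →L[ℝ] Eu n) : Eu n →ₗ[ℝ] Eu n)

/-- `K` is a smooth, strictly convex body with positive support function. -/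
structure IsSmoothConvexBody {n : ℕ} (K : Set (Eu n)) : Prop where
  compact : IsCompact K
  convex : Convex ℝ K
  interior_nonempty : (interior K).Nonempty
  pos : ∀ x : Sph n, 0 < sfn K x
  smooth : ContDiffOn ℝ (⊤ : ℕ∞) (sfn K) {(0 : Eu n)}ᶜ
  posdef : ∀ x : Sph n, ∀ v : Eu n, v ≠ 0 →
    0 < ⟪(hessA K (x : Eu n) + tens (x : Eu n)) v, v⟫_ℝ

/-- The density `h·det(A + x⊗x)` of the measure `dV` with respect to `dθ`. -/
def dens {n : ℕ} (K : Set (Eu n)) (x : Eu n) : ℝ := sfn K x * rK K x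

/-- The centroid-type point `c(K) = (∫ ∇h_K dV)/(∫ dV)`. -/
def cK {n : ℕ} (K : Set (Eu n)) : Eu n :=
  (∫ x : Sph n, dens K x ∂sphMeas n)⁻¹ •
    ∫ x : Sph n, dens K x • gradient (sfn K) x ∂sphMeas n

/-- The support function of the translated body `K - c(K)`. -/
def tsfn {n : ℕ} (K : Set (Eu n)) (x : Eu n) : ℝ := sfn K x - ⟪x, cK K⟫_ℝ


variable {n : ℕ} {K : Set (Eu n)}

lemma sfn_bdd (hc : IsCompact K) (z : Eu n) : BddAbove ((fun y => ⟪z, y⟫_ℝ) '' K) :=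
  (hc.image (continuous_const.inner continuous_id)).bddAbove

lemma le_sfn (hc : IsCompact K) {y : Eu n} (hy : y ∈ K) (z : Eu n) : ⟪z, y⟫_ℝ ≤ sfn K z :=
  le_csSup (sfn_bdd hc z) (Set.mem_image_of_mem _ hy)

lemma sfn_le (hne : K.Nonempty) {z : Eu n} {a : ℝ} (h : ∀ y ∈ K, ⟪z, y⟫_ℝ ≤ a) :
    sfn K z ≤ a := csSup_le (hne.image _) (by rintro _ ⟨y, hy, rfl⟩; exact h y hy)

lemma mem_of_inner_le_sfn (hc : IsCompact K) (hconv : Convex ℝ K) (hne : K.Nonempty) {p : Eu n}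
    (h : ∀ z : Eu n, ⟪z, p⟫_ℝ ≤ sfn K z) : p ∈ K := by
  by_contra hp
  obtain ⟨f, u, hfu, hup⟩ := geometric_hahn_banach_closed_point hconv hc.isClosed hp
  set z := (InnerProductSpace.toDual ℝ (Eu n)).symm f with hz
  have hzf : ∀ w : Eu n, ⟪z, w⟫_ℝ = f w := by
    intro w
    simp [hz, real_inner_comm]
  have h1 : sfn K z ≤ u := sfn_le hne fun y hy => (hzf y ▸ (hfu y hy).le)
  have := h z
  rw [hzf p] at this
  linarith [hup]

lemma sfn_add_smul_le (hc : IsCompact K) (hne : K.Nonempty) (x u : Eu n) {t : ℝ} (ht : 0 ≤ t) :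
    sfn K (x + t • u) ≤ sfn K x + t * sfn K u := by
  apply sfn_le hne
  intro y hy
  have h1 := le_sfn hc hy x
  have h2 := le_sfn hc hy u
  rw [inner_add_left, real_inner_smul_left]
  nlinarith

lemma fderiv_le_sfn (hc : IsCompact K) (hne : K.Nonempty) {x : Eu n}
    (hd : DifferentiableAt ℝ (sfn K) x) (u : Eu n) :
    fderiv ℝ (sfn K) x u ≤ sfn K u := by
  have hline : HasDerivAt (fun t : ℝ => x + t • u) u 0 := by
    have h1 : HasDerivAt (fun t : ℝ => t • u) ((1 : ℝ) • u) 0 := (hasDerivAt_id 0).smul_const u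
    simpa using h1.const_add x
  have hφ : HasDerivAt (fun t : ℝ => sfn K (x + t • u)) (fderiv ℝ (sfn K) x u) 0 := by
    have hfd : HasFDerivAt (sfn K) (fderiv ℝ (sfn K) x) (x + (0:ℝ) • u) := by
      simpa using hd.hasFDerivAt
    exact hfd.comp_hasDerivAt (x := (0 : ℝ)) hline
  rw [hasDerivAt_iff_tendsto_slope] at hφ
  have hmono : (𝓝[>] (0:ℝ)) ≤ 𝓝[≠] (0:ℝ) :=
    nhdsWithin_mono 0 (fun t ht => ne_of_gt ht)
  refine le_of_tendsto (hφ.mono_left hmono) ?_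
  filter_upwards [self_mem_nhdsWithin] with t (ht : 0 < t)
  rw [slope_def_field]
  have hb := sfn_add_smul_le hc hne x u ht.le
  rw [div_le_iff₀ (by simpa using ht)]
  simp only [sub_zero, zero_smul, add_zero]
  nlinarith

lemma inner_gradient_eq {f : Eu n → ℝ} (x u : Eu n) :
    ⟪gradient f x, u⟫_ℝ = fderiv ℝ f x u := by
  rw [gradient]
  exact InnerProductSpace.toDual_symm_apply

lemma gradient_mem (hc : IsCompact K) (hconv : Convex ℝ K) (hne : K.Nonempty) {x : Eu n}
    (hd : DifferentiableAt ℝ (sfn K) x) : gradient (sfn K) x ∈ K := by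
  apply mem_of_inner_le_sfn hc hconv hne
  intro z
  rw [real_inner_comm, inner_gradient_eq]
  exact fderiv_le_sfn hc hne hd z

lemma cont_clm_det : Continuous fun T : Eu n →L[ℝ] Eu n =>
    LinearMap.det (T : Eu n →ₗ[ℝ] Eu n) := by
  classical
  let b := Module.finBasis ℝ (Eu n)
  let L : (Eu n →L[ℝ] Eu n) →ₗ[ℝ] Matrix (Fin (Module.finrank ℝ (Eu n))) (Fin (Module.finrank ℝ (Eu n))) ℝ :=
    (LinearMap.toMatrix b b).toLinearMap ∘ₗ (ContinuousLinearMap.coeLM ℝ)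
  have hL : Continuous L := L.continuous_of_finiteDimensional
  have : (fun T : Eu n →L[ℝ] Eu n => LinearMap.det (T : Eu n →ₗ[ℝ] Eu n)) =
      fun T => Matrix.det (L T) := by
    funext T
    simp [L, LinearMap.det_toMatrix]
  rw [this]
  exact hL.matrix_det

lemma det_pos_of_inner_pos {T : Eu n →L[ℝ] Eu n}
    (h : ∀ v : Eu n, v ≠ 0 → 0 < ⟪T v, v⟫_ℝ) :
    0 < LinearMap.det (T : Eu n →ₗ[ℝ] Eu n) := by
  set S : ℝ → (Eu n →L[ℝ] Eu n) := fun t => (1 - t) • (1 : Eu n →L[ℝ] Eu n) + t • T with hS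
  have hScont : Continuous S := by
    apply Continuous.add
    · exact ((continuous_const.sub continuous_id)).smul continuous_const
    · exact continuous_id.smul continuous_const
  set g : ℝ → ℝ := fun t => LinearMap.det ((S t : Eu n →L[ℝ] Eu n) : Eu n →ₗ[ℝ] Eu n) with hg
  have hgcont : Continuous g := cont_clm_det.comp hScont
  have hg0 : g 0 = 1 := by
    have h1 : ((1 : Eu n →L[ℝ] Eu n) : Eu n →ₗ[ℝ] Eu n) = LinearMap.id := rfl
    simp [hg, hS, h1]
  have hne : ∀ t ∈ Set.Icc (0:ℝ) 1, g t ≠ 0 := by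
    intro t ht
    have hinj : Function.Injective ((S t : Eu n →L[ℝ] Eu n) : Eu n →ₗ[ℝ] Eu n) := by
      rw [← LinearMap.ker_eq_bot, LinearMap.ker_eq_bot']
      intro v hv
      by_contra hv0
      have hvv : (0:ℝ) < ⟪v, v⟫_ℝ := by
        rw [real_inner_self_eq_norm_sq]
        have := norm_pos_iff.mpr hv0
        positivity
      have hTv := h v hv0
      have hexp : ⟪S t v, v⟫_ℝ = (1 - t) * ⟪v, v⟫_ℝ + t * ⟪T v, v⟫_ℝ := by
        simp only [hS, ContinuousLinearMap.add_apply, ContinuousLinearMap.smul_apply,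
          ContinuousLinearMap.one_apply, inner_add_left, real_inner_smul_left]
      have hpos : 0 < ⟪S t v, v⟫_ℝ := by
        rw [hexp]
        rcases eq_or_lt_of_le ht.1 with h0 | h0
        · rw [← h0]; simpa using hvv
        · nlinarith [ht.2]
      have hv' : S t v = 0 := hv
      rw [hv'] at hpos
      simp at hpos
    have hbij : Function.Bijective ((S t : Eu n →L[ℝ] Eu n) : Eu n →ₗ[ℝ] Eu n) :=
      ⟨hinj, (LinearMap.injective_iff_surjective).mp hinj⟩
    have := (LinearEquiv.ofBijective _ hbij).isUnit_det'
    exact IsUnit.ne_zero this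
  by_contra hle
  push_neg at hle
  have h01 : (0:ℝ) ≤ 1 := zero_le_one
  have : (0:ℝ) ∈ Set.Icc (g 1) (g 0) := by
    constructor
    · simpa [hg, hS] using hle
    · rw [hg0]; exact zero_le_one
  obtain ⟨t, ht, hgt⟩ := intermediate_value_Icc' h01 hgcont.continuousOn this
  exact hne t ht hgt

lemma IsSmoothConvexBody.nonempty (hK : IsSmoothConvexBody K) : K.Nonempty :=
  (hK.interior_nonempty).mono interior_subset

lemma sph_ne_zero (x : Sph n) : (x : Eu n) ≠ 0 := by
  have hx : ‖(x : Eu n)‖ = 1 := by simpa using mem_sphere_zero_iff_norm.mp x.2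
  intro h; rw [h] at hx; simp at hx

lemma sfn_lipschitz (hc : IsCompact K) (hne : K.Nonempty) :
    ∃ M : ℝ, 0 ≤ M ∧ LipschitzWith (Real.toNNReal M) (sfn K) := by
  obtain ⟨M, hM0, hM⟩ : ∃ M : ℝ, 0 ≤ M ∧ ∀ y ∈ K, ‖y‖ ≤ M := by
    obtain ⟨M, hM⟩ := hc.isBounded.exists_norm_le
    exact ⟨max M 0, le_max_right _ _, fun y hy => (hM y hy).trans (le_max_left _ _)⟩
  refine ⟨M, hM0, LipschitzWith.of_dist_le_mul fun z z' => ?_⟩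
  rw [Real.coe_toNNReal _ hM0, Real.dist_eq, dist_eq_norm]
  have key : ∀ w w' : Eu n, sfn K w - sfn K w' ≤ M * ‖w - w'‖ := by
    intro w w'
    rw [sub_le_iff_le_add]
    refine sfn_le hne fun y hy => ?_
    have h1 := le_sfn hc hy w'
    have h2 : ⟪w - w', y⟫_ℝ ≤ M * ‖w - w'‖ := by
      calc ⟪w - w', y⟫_ℝ ≤ ‖w - w'‖ * ‖y‖ := real_inner_le_norm _ _
        _ ≤ ‖w - w'‖ * M := by
            have := hM y hy
            have : ‖y‖ ≤ M := this
            nlinarith [norm_nonneg (w - w')]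
        _ = M * ‖w - w'‖ := mul_comm _ _
    have : ⟪w, y⟫_ℝ = ⟪w', y⟫_ℝ + ⟪w - w', y⟫_ℝ := by rw [← inner_add_left, add_sub_cancel]
    linarith
  have h1 := key z z'
  have h2 := key z' z
  rw [abs_le]
  constructor
  · have : ‖z' - z‖ = ‖z - z'‖ := norm_sub_rev _ _
    linarith [h2, this ▸ h2]
  · exact h1

lemma sfn_continuous (hc : IsCompact K) (hne : K.Nonempty) : Continuous (sfn K) := by
  obtain ⟨M, _, hL⟩ := sfn_lipschitz hc hne
  exact hL.continuous

lemma gradient_contDiffOn (hK : IsSmoothConvexBody K) :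
    ContDiffOn ℝ (⊤ : ℕ∞) (gradient (sfn K)) {(0 : Eu n)}ᶜ := by
  have hfd : ContDiffOn ℝ (⊤ : ℕ∞) (fun x => fderiv ℝ (sfn K) x) {(0 : Eu n)}ᶜ :=
    hK.smooth.fderiv_of_isOpen isOpen_compl_singleton (by simp)
  have : gradient (sfn K) = fun x =>
      (InnerProductSpace.toDual ℝ (Eu n)).symm (fderiv ℝ (sfn K) x) := rfl
  rw [this]
  exact ((InnerProductSpace.toDual ℝ (Eu n)).symm.contDiff).comp_contDiffOn hfd

lemma hessA_continuousOn (hK : IsSmoothConvexBody K) :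
    ContinuousOn (fun x => hessA K x) {(0 : Eu n)}ᶜ :=
  (gradient_contDiffOn hK).continuousOn_fderiv_of_isOpen isOpen_compl_singleton
    (by exact_mod_cast le_top)

lemma tens_continuous : Continuous (fun x : Eu n => tens x) := by
  have h1 : Continuous fun x : Eu n =>
      (ContinuousLinearMap.smulRightL ℝ (Eu n) (Eu n)).comp (innerSL ℝ (E := Eu n)) x :=
    ((ContinuousLinearMap.smulRightL ℝ (Eu n) (Eu n)).comp
      (innerSL ℝ (E := Eu n))).continuous
  exact h1.clm_apply continuous_id

lemma rK_continuousOn (hK : IsSmoothConvexBody K) :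
    ContinuousOn (rK K) {(0 : Eu n)}ᶜ := by
  have : ContinuousOn (fun x => hessA K x + tens x) {(0 : Eu n)}ᶜ :=
    (hessA_continuousOn hK).add tens_continuous.continuousOn
  exact cont_clm_det.comp_continuousOn this

lemma dens_continuousOn (hK : IsSmoothConvexBody K) :
    ContinuousOn (dens K) {(0 : Eu n)}ᶜ :=
  ((sfn_continuous hK.compact hK.nonempty).continuousOn).mul (rK_continuousOn hK)

lemma rK_pos (hK : IsSmoothConvexBody K) (x : Sph n) : 0 < rK K (x : Eu n) :=
  det_pos_of_inner_pos (hK.posdef x)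

lemma dens_pos (hK : IsSmoothConvexBody K) (x : Sph n) : 0 < dens K (x : Eu n) :=
  mul_pos (hK.pos x) (rK_pos hK x)

lemma sfn_diffAt (hK : IsSmoothConvexBody K) {x : Eu n} (hx : x ≠ 0) :
    DifferentiableAt ℝ (sfn K) x :=
  (hK.smooth.contDiffAt (isOpen_compl_singleton.mem_nhds hx)).differentiableAt
    (by simp)

open scoped Pointwise in
lemma sphMeas_pos_of_isOpen {U : Set (Sph n)} (hU : IsOpen U) (hne : U.Nonempty) :
    0 < sphMeas n U := by
  obtain ⟨W, hW, hUW⟩ := isOpen_induced_iff.mp hU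
  obtain ⟨u₀, hu₀⟩ := hne
  set A : Set (Eu n) := {x | 0 < ‖x‖} with hA
  have hAopen : IsOpen A := isOpen_lt continuous_const continuous_norm
  have hfcont : ContinuousOn (fun x : Eu n => ‖x‖⁻¹ • x) A := by
    refine ContinuousOn.smul (f := fun x : Eu n => ‖x‖⁻¹) (g := fun x : Eu n => x) ?_ continuous_id.continuousOn
    exact (continuous_norm.continuousOn.inv₀ fun x hx => ne_of_gt hx)
  set V : Set (Eu n) := (A ∩ (fun x : Eu n => ‖x‖⁻¹ • x) ⁻¹' W) ∩ {x | ‖x‖ < 1} with hV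
  have hVopen : IsOpen V :=
    (hfcont.isOpen_inter_preimage hAopen hW).inter (isOpen_lt continuous_norm continuous_const)
  have hVsub : V ⊆ Set.Ioo (0:ℝ) 1 • (Subtype.val '' U) := by
    rintro x ⟨⟨hx0, hxW⟩, hx1⟩
    have hr : 0 < ‖x‖ := hx0
    have hu : ‖(‖x‖⁻¹ • x)‖ = 1 := by
      rw [norm_smul, norm_inv, norm_norm, inv_mul_cancel₀ (ne_of_gt hr)]
    set u : Sph n := ⟨‖x‖⁻¹ • x, mem_sphere_zero_iff_norm.mpr hu⟩ with huu
    have huU : u ∈ U := by rw [← hUW]; exact hxW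
    have hxu : x = ‖x‖ • (u : Eu n) := by
      rw [huu, smul_smul, mul_inv_cancel₀ (ne_of_gt hr), one_smul]
    rw [hxu]
    exact Set.smul_mem_smul ⟨hr, hx1⟩ (Set.mem_image_of_mem _ huU)
  have hVne : V.Nonempty := by
    refine ⟨(1/2 : ℝ) • (u₀ : Eu n), ?_⟩
    have hn : ‖(u₀ : Eu n)‖ = 1 := mem_sphere_zero_iff_norm.mp u₀.2
    have hnx : ‖((1/2 : ℝ) • (u₀ : Eu n))‖ = 1/2 := by
      rw [norm_smul, hn]; norm_num
    refine ⟨⟨?_, ?_⟩, ?_⟩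
    · rw [Set.mem_setOf_eq, hnx]; norm_num
    · show (‖((1/2 : ℝ) • (u₀ : Eu n))‖⁻¹ • ((1/2 : ℝ) • (u₀ : Eu n))) ∈ W
      rw [hnx, smul_smul]
      norm_num
      rw [← hUW] at hu₀
      exact hu₀
    · rw [Set.mem_setOf_eq, hnx]; norm_num
  have happ := (volume : Measure (Eu n)).toSphere_apply' (s := U) hU.measurableSet
  have hposV : 0 < volume V := hVopen.measure_pos volume hVne
  have : 0 < (volume : Measure (Eu n)) (Set.Ioo (0:ℝ) 1 • (Subtype.val '' U)) :=
    lt_of_lt_of_le hposV (measure_mono hVsub)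
  rw [show sphMeas n U = (volume : Measure (Eu n)).toSphere U from rfl, happ]
  have hd : (0:ℝ≥0∞) < (Module.finrank ℝ (Eu n) : ℝ≥0∞) := by
    have : 0 < Module.finrank ℝ (Eu n) := Module.finrank_pos
    exact_mod_cast this
  exact ENNReal.mul_pos (ne_of_gt hd) (ne_of_gt this)

instance sphMeas_finite : IsFiniteMeasure (sphMeas n) := by
  unfold sphMeas; infer_instance

lemma sph_nonempty : Nonempty (Sph n) :=
  ⟨⟨EuclideanSpace.single (0 : Fin (n+1)) (1:ℝ), by
    rw [mem_sphere_zero_iff_norm, EuclideanSpace.norm_single]; norm_num⟩⟩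

lemma sphMeas_univ_pos : 0 < sphMeas n Set.univ :=
  sphMeas_pos_of_isOpen isOpen_univ (by
    obtain ⟨x⟩ := (sph_nonempty (n := n)); exact ⟨x, trivial⟩)

lemma integrable_cont' {E : Type*} [NormedAddCommGroup E] (ν : Measure (Sph n))
    [IsFiniteMeasure ν] {f : Sph n → E} (hf : Continuous f) :
    Integrable f ν := by
  have hcs : HasCompactSupport f :=
    IsCompact.of_isClosed_subset isCompact_univ (isClosed_tsupport f) (Set.subset_univ _)
  exact hf.integrable_of_hasCompactSupport hcs

lemma integrable_cont {E : Type*} [NormedAddCommGroup E] {f : Sph n → E} (hf : Continuous f) :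
    Integrable f (sphMeas n) := integrable_cont' _ hf

lemma grad_cont_sph (hK : IsSmoothConvexBody K) :
    Continuous (fun x : Sph n => gradient (sfn K) (x : Eu n)) :=
  (gradient_contDiffOn hK).continuousOn.comp_continuous continuous_subtype_val
    (fun x => sph_ne_zero x)

lemma dens_cont_sph (hK : IsSmoothConvexBody K) :
    Continuous (fun x : Sph n => dens K (x : Eu n)) :=
  (dens_continuousOn hK).comp_continuous continuous_subtype_val (fun x => sph_ne_zero x)

lemma integral_dens_pos (hK : IsSmoothConvexBody K) :
    0 < ∫ x : Sph n, dens K (x : Eu n) ∂sphMeas n := by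
  rw [integral_pos_iff_support_of_nonneg
    (fun x => (dens_pos hK x).le) (integrable_cont (dens_cont_sph hK))]
  have : Function.support (fun x : Sph n => dens K (x : Eu n)) = Set.univ :=
    Set.eq_univ_of_forall fun x => ne_of_gt (dens_pos hK x)
  rw [this]
  exact sphMeas_univ_pos

lemma cK_mem (hK : IsSmoothConvexBody K) : cK K ∈ K := by
  set μ := sphMeas n
  set d : Sph n → ℝ := fun x => dens K (x : Eu n) with hd
  set g : Sph n → Eu n := fun x => gradient (sfn K) (x : Eu n) with hg
  have hdmeas : Measurable fun x => Real.toNNReal (d x) :=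
    (dens_cont_sph hK).measurable.real_toNNReal
  set ν := μ.withDensity (fun x => (Real.toNNReal (d x) : ℝ≥0∞)) with hν
  have hIntd : Integrable d μ := integrable_cont (dens_cont_sph hK)
  have hIpos : 0 < ∫ x, d x ∂μ := integral_dens_pos hK
  have hνuniv : ν Set.univ = ENNReal.ofReal (∫ x, d x ∂μ) := by
    rw [hν, withDensity_apply _ MeasurableSet.univ, Measure.restrict_univ,
      show (fun x => ((d x).toNNReal : ℝ≥0∞)) = fun x => ENNReal.ofReal (d x) from rfl,
      ← ofReal_integral_eq_lintegral_ofReal hIntd (ae_of_all _ fun x => (dens_pos hK x).le)]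
  have hfin : IsFiniteMeasure ν := ⟨by rw [hνuniv]; exact ENNReal.ofReal_lt_top⟩
  have hnz : NeZero ν := ⟨by
    rw [← Measure.measure_univ_ne_zero, hνuniv]
    exact ne_of_gt (ENNReal.ofReal_pos.mpr hIpos)⟩
  have hgν : Integrable g ν := integrable_cont' ν (grad_cont_sph hK)
  have hmem : (⨍ x, g x ∂ν) ∈ K :=
    hK.convex.average_mem hK.compact.isClosed
      (ae_of_all _ fun x => gradient_mem hK.compact hK.convex hK.nonempty
        (sfn_diffAt hK (sph_ne_zero x))) hgν
  have key : cK K = ⨍ x, g x ∂ν := by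
    rw [average_eq, measureReal_def, hνuniv, ENNReal.toReal_ofReal hIpos.le]
    rw [hν, integral_withDensity_eq_integral_smul hdmeas g]
    have : (fun x => Real.toNNReal (d x) • g x) = fun x => d x • g x := by
      funext x
      rw [NNReal.smul_def, Real.coe_toNNReal _ (dens_pos hK x).le]
    rw [this]
    rfl
  rw [key]
  exact hmem

def Ifun (n : ℕ) (e : Eu n) : ℝ := ∫ x : Sph n, max ⟪(x : Eu n), e⟫_ℝ 0 ∂sphMeas n

lemma mfun_cont (e : Eu n) : Continuous fun x : Sph n => max ⟪(x : Eu n), e⟫_ℝ 0 :=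
  (continuous_subtype_val.inner continuous_const).max continuous_const

lemma Ifun_cont : Continuous (Ifun n) := by
  set C : ℝ := ((sphMeas n) Set.univ).toReal with hC
  have hC0 : 0 ≤ C := ENNReal.toReal_nonneg
  have key : ∀ e e' : Eu n, Ifun n e - Ifun n e' ≤ C * ‖e - e'‖ := by
    intro e e'
    rw [show Ifun n e - Ifun n e' = ∫ x : Sph n,
        (max ⟪(x : Eu n), e⟫_ℝ 0 - max ⟪(x : Eu n), e'⟫_ℝ 0) ∂sphMeas n from
      (integral_sub (integrable_cont (mfun_cont e)) (integrable_cont (mfun_cont e'))).symm]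
    have hb : ∀ x : Sph n, max ⟪(x : Eu n), e⟫_ℝ 0 - max ⟪(x : Eu n), e'⟫_ℝ 0 ≤ ‖e - e'‖ := by
      intro x
      have h1 : |max ⟪(x : Eu n), e⟫_ℝ 0 - max ⟪(x : Eu n), e'⟫_ℝ 0| ≤
          |⟪(x : Eu n), e⟫_ℝ - ⟪(x : Eu n), e'⟫_ℝ| := abs_max_sub_max_le_abs _ _ _
      have h2 : |⟪(x : Eu n), e⟫_ℝ - ⟪(x : Eu n), e'⟫_ℝ| ≤ ‖e - e'‖ := by
        rw [← inner_sub_right]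
        calc |⟪(x : Eu n), e - e'⟫_ℝ| ≤ ‖(x : Eu n)‖ * ‖e - e'‖ := abs_real_inner_le_norm _ _
          _ = ‖e - e'‖ := by rw [mem_sphere_zero_iff_norm.mp x.2, one_mul]
      calc max ⟪(x : Eu n), e⟫_ℝ 0 - max ⟪(x : Eu n), e'⟫_ℝ 0 ≤
          |max ⟪(x : Eu n), e⟫_ℝ 0 - max ⟪(x : Eu n), e'⟫_ℝ 0| := le_abs_self _
        _ ≤ ‖e - e'‖ := h1.trans h2
    calc ∫ x : Sph n, (max ⟪(x : Eu n), e⟫_ℝ 0 - max ⟪(x : Eu n), e'⟫_ℝ 0) ∂sphMeas n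
        ≤ ∫ _x : Sph n, ‖e - e'‖ ∂sphMeas n := by
          apply integral_mono _ (integrable_const _) hb
          exact (integrable_cont (mfun_cont e)).sub (integrable_cont (mfun_cont e'))
      _ = C * ‖e - e'‖ := by rw [integral_const]; simp [hC, smul_eq_mul, measureReal_def]
  have hlip : LipschitzWith (Real.toNNReal C) (Ifun n) := by
    apply LipschitzWith.of_dist_le_mul
    intro e e'
    rw [Real.dist_eq, dist_eq_norm, Real.coe_toNNReal _ hC0, abs_le]
    constructor
    · have := key e' e
      rw [norm_sub_rev] at this
      linarith
    · exact key e e'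
  exact hlip.continuous

lemma Ifun_pos {e : Eu n} (he : ‖e‖ = 1) : 0 < Ifun n e := by
  rw [Ifun, integral_pos_iff_support_of_nonneg
    (f := fun x : Sph n => max ⟪(x : Eu n), e⟫_ℝ 0)
    (fun x => le_max_right _ _) (integrable_cont (mfun_cont e))]
  set U : Set (Sph n) := {x : Sph n | 0 < ⟪(x : Eu n), e⟫_ℝ} with hU
  have hUopen : IsOpen U := isOpen_lt continuous_const (continuous_subtype_val.inner continuous_const)
  have hUne : U.Nonempty := by
    refine ⟨⟨e, mem_sphere_zero_iff_norm.mpr he⟩, ?_⟩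
    rw [hU, Set.mem_setOf_eq]
    show (0:ℝ) < ⟪e, e⟫_ℝ
    rw [real_inner_self_eq_norm_sq, he]
    norm_num
  have hsub : U ⊆ Function.support fun x : Sph n => max ⟪(x : Eu n), e⟫_ℝ 0 := by
    intro x hx
    exact ne_of_gt (lt_max_of_lt_left hx)
  exact lt_of_lt_of_le (sphMeas_pos_of_isOpen hUopen hUne) (measure_mono hsub)

lemma exists_c1 : ∃ c₁ : ℝ, 0 < c₁ ∧
    ∀ e : Eu n, ‖e‖ = 1 → c₁ ≤ ((sphMeas n) Set.univ).toReal⁻¹ * Ifun n e := by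
  have hcomp : IsCompact (Metric.sphere (0 : Eu n) 1) := isCompact_sphere _ _
  have hne : (Metric.sphere (0 : Eu n) 1).Nonempty := by
    obtain ⟨x⟩ := (sph_nonempty (n := n)); exact ⟨x, x.2⟩
  set T : ℝ := ((sphMeas n) Set.univ).toReal with hT
  have hTpos : 0 < T := ENNReal.toReal_pos (ne_of_gt sphMeas_univ_pos) (measure_ne_top _ _)
  obtain ⟨e₀, he₀, hmin⟩ := hcomp.exists_isMinOn hne (Ifun_cont.continuousOn)
  refine ⟨T⁻¹ * Ifun n e₀, mul_pos (inv_pos.mpr hTpos) (Ifun_pos (mem_sphere_zero_iff_norm.mp he₀)), ?_⟩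
  intro e he
  have := hmin (mem_sphere_zero_iff_norm.mpr he)
  have hTinv : 0 ≤ T⁻¹ := (inv_pos.mpr hTpos).le
  exact mul_le_mul_of_nonneg_left this hTinv




/-- There is `c₁ = c₁(n) > 0` such that the normalized body
`K̄ = (K − c(K))/(⨍ h̃ dθ)` satisfies `h_{K̄} ≤ 1/c₁` on `S^n`; in particular
`diam (K̄ ∪ B) ≤ 2 (1 + 1/c₁)`. -/
theorem normalized_body_bounded (n : ℕ) (hn : 1 ≤ n) :
    ∃ c₁ : ℝ, 0 < c₁ ∧
      ∀ K : Set (Eu n), IsSmoothConvexBody K →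
        (∀ x : Sph n,
          tsfn K (x : Eu n) / (⨍ y : Sph n, tsfn K (y : Eu n) ∂sphMeas n) ≤ 1 / c₁) ∧
        Metric.diam
            (((fun y : Eu n =>
                (⨍ y' : Sph n, tsfn K (y' : Eu n) ∂sphMeas n)⁻¹ • (y - cK K)) '' K) ∪
              Metric.closedBall (0 : Eu n) 1) ≤ 2 * (1 + 1 / c₁) := by
  obtain ⟨c₁, hc₁, hc₁min⟩ := exists_c1 (n := n)
  refine ⟨c₁, hc₁, ?_⟩
  intro K hK
  set c := cK K with hc
  have hcK : c ∈ K := cK_mem hK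
  obtain ⟨y₀, hy₀K, hy₀max⟩ := hK.compact.exists_isMaxOn hK.nonempty
    ((continuous_id.sub continuous_const).norm.continuousOn (s := K) (f := fun y => ‖y - c‖))
  set w : Eu n := y₀ - c with hw
  set R : ℝ := ‖w‖ with hR
  have hRmax : ∀ y ∈ K, ‖y - c‖ ≤ R := fun y hy => hy₀max hy
  have hRpos : 0 < R := by
    obtain ⟨z, hz⟩ := hK.interior_nonempty
    obtain ⟨ε, hε, hball⟩ := Metric.isOpen_iff.mp isOpen_interior z hz
    set e₁ : Eu n := EuclideanSpace.single (0 : Fin (n+1)) (1:ℝ) with he₁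
    have he₁n : ‖e₁‖ = 1 := by rw [he₁, EuclideanSpace.norm_single]; norm_num
    have hz1 : z ∈ K := interior_subset hz
    have hz2 : z + (ε/2) • e₁ ∈ K := by
      apply interior_subset
      apply hball
      rw [Metric.mem_ball, dist_eq_norm, add_sub_cancel_left, norm_smul, he₁n]
      rw [mul_one, Real.norm_eq_abs, abs_of_pos (by linarith)]
      linarith
    by_contra hR0
    push_neg at hR0
    have hRz : ∀ y ∈ K, y = c := by
      intro y hy
      have h0 : ‖y - c‖ ≤ 0 := (hRmax y hy).trans hR0
      exact sub_eq_zero.mp (norm_le_zero_iff.mp h0)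
    have e1 := hRz z hz1
    have e2 := hRz _ hz2
    rw [← e1] at e2
    have hv0 : (ε/2) • e₁ = 0 := add_eq_left.mp e2
    have hnz : ‖(ε/2) • e₁‖ = ε/2 := by
      rw [norm_smul, he₁n, mul_one, Real.norm_eq_abs, abs_of_pos (by linarith)]
    rw [hv0] at hnz
    simp at hnz
    linarith
  have htsfn_le : ∀ x : Sph n, tsfn K (x : Eu n) ≤ R := by
    intro x
    have hxn : ‖(x : Eu n)‖ = 1 := mem_sphere_zero_iff_norm.mp x.2
    rw [tsfn, sub_le_iff_le_add]
    apply sfn_le hK.nonempty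
    intro y hy
    have hsplit : ⟪(x : Eu n), y⟫_ℝ = ⟪(x : Eu n), y - c⟫_ℝ + ⟪(x : Eu n), c⟫_ℝ := by
      rw [← inner_add_right, sub_add_cancel]
    have hCS : ⟪(x : Eu n), y - c⟫_ℝ ≤ ‖y - c‖ := by
      calc ⟪(x : Eu n), y - c⟫_ℝ ≤ ‖(x : Eu n)‖ * ‖y - c‖ := real_inner_le_norm _ _
        _ = ‖y - c‖ := by rw [hxn, one_mul]
    have := hRmax y hy
    linarith [hsplit, hCS]
  have htsfn_ge : ∀ x : Sph n, max ⟪(x : Eu n), w⟫_ℝ 0 ≤ tsfn K (x : Eu n) := by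
    intro x
    rw [tsfn]
    apply max_le
    · have h1 := le_sfn hK.compact hy₀K (x : Eu n)
      have h2 : ⟪(x : Eu n), w⟫_ℝ = ⟪(x : Eu n), y₀⟫_ℝ - ⟪(x : Eu n), c⟫_ℝ := by
        rw [hw, inner_sub_right]
      linarith
    · have := le_sfn hK.compact hcK (x : Eu n)
      linarith
  have htcont : Continuous fun x : Sph n => tsfn K (x : Eu n) := by
    have : (fun x : Sph n => tsfn K (x : Eu n)) =
        fun x : Sph n => sfn K (x : Eu n) - ⟪(x : Eu n), cK K⟫_ℝ := rfl
    rw [this]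
    exact ((sfn_continuous hK.compact hK.nonempty).comp continuous_subtype_val).sub
      (continuous_subtype_val.inner continuous_const)
  set sAvg : ℝ := ⨍ y : Sph n, tsfn K (y : Eu n) ∂sphMeas n with hsAvg
  set T : ℝ := ((sphMeas n) Set.univ).toReal with hT
  have hTpos : 0 < T := ENNReal.toReal_pos (ne_of_gt sphMeas_univ_pos) (measure_ne_top _ _)
  set e : Eu n := R⁻¹ • w with he
  have hen : ‖e‖ = 1 := by
    rw [he, norm_smul, Real.norm_eq_abs, abs_of_pos (inv_pos.mpr hRpos), ← hR,
      inv_mul_cancel₀ (ne_of_gt hRpos)]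
  have hwe : w = R • e := by
    rw [he, smul_smul, mul_inv_cancel₀ (ne_of_gt hRpos), one_smul]
  have hpt : ∀ x : Sph n, max ⟪(x : Eu n), w⟫_ℝ 0 = R * max ⟪(x : Eu n), e⟫_ℝ 0 := by
    intro x
    rw [mul_max_of_nonneg _ _ hRpos.le, mul_zero]
    congr 1
    rw [hwe, real_inner_smul_right]
  have hIeq : ∫ x : Sph n, max ⟪(x : Eu n), w⟫_ℝ 0 ∂sphMeas n = R * Ifun n e := by
    simp only [hpt]
    rw [Ifun, MeasureTheory.integral_const_mul]
  have hmono : ∫ x : Sph n, max ⟪(x : Eu n), w⟫_ℝ 0 ∂sphMeas n ≤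
      ∫ x : Sph n, tsfn K (x : Eu n) ∂sphMeas n :=
    integral_mono (integrable_cont (mfun_cont w)) (integrable_cont htcont) htsfn_ge
  have hAvg : sAvg = T⁻¹ * ∫ x : Sph n, tsfn K (x : Eu n) ∂sphMeas n := by
    rw [hsAvg, average_eq, smul_eq_mul, hT, measureReal_def]
  have hIle : c₁ * R ≤ sAvg := by
    have h1 : c₁ ≤ T⁻¹ * Ifun n e := hc₁min e hen
    have h2 : T⁻¹ * (R * Ifun n e) ≤ T⁻¹ * ∫ x : Sph n, tsfn K (x : Eu n) ∂sphMeas n :=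
      mul_le_mul_of_nonneg_left (hIeq ▸ hmono) (inv_pos.mpr hTpos).le
    have hTi : (0:ℝ) ≤ T⁻¹ := (inv_pos.mpr hTpos).le
    calc c₁ * R ≤ (T⁻¹ * Ifun n e) * R :=
          mul_le_mul_of_nonneg_right h1 hRpos.le
      _ = T⁻¹ * (R * Ifun n e) := by ring
      _ ≤ T⁻¹ * ∫ x : Sph n, tsfn K (x : Eu n) ∂sphMeas n := h2
      _ = sAvg := hAvg.symm
  have hsPos : 0 < sAvg := lt_of_lt_of_le (mul_pos hc₁ hRpos) hIle
  constructor
  · intro x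
    have h1 := htsfn_le x
    have h2 : tsfn K (x : Eu n) / sAvg ≤ R / (c₁ * R) :=
      div_le_div₀ hRpos.le h1 (mul_pos hc₁ hRpos) hIle
    have h3 : R / (c₁ * R) = 1 / c₁ := by
      field_simp
    rw [h3] at h2
    exact h2
  · have hsub : (((fun y : Eu n => sAvg⁻¹ • (y - c)) '' K) ∪
        Metric.closedBall (0 : Eu n) 1) ⊆ Metric.closedBall (0 : Eu n) (1 + 1 / c₁) := by
      rintro p (⟨y, hy, rfl⟩ | hp)
      · rw [mem_closedBall_zero_iff, norm_smul, Real.norm_eq_abs,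
          abs_of_pos (inv_pos.mpr hsPos)]
        have hy' := hRmax y hy
        have hinv : sAvg⁻¹ ≤ (c₁ * R)⁻¹ := by
          apply inv_anti₀ (mul_pos hc₁ hRpos) hIle
        have hmul : sAvg⁻¹ * ‖y - c‖ ≤ (c₁ * R)⁻¹ * R :=
          mul_le_mul hinv hy' (norm_nonneg _) (inv_pos.mpr (mul_pos hc₁ hRpos)).le
        have heq : (c₁ * R)⁻¹ * R = 1 / c₁ := by
          field_simp
        have h1c : (0:ℝ) < 1 / c₁ := by positivity
        linarith
      · rw [mem_closedBall_zero_iff] at hp ⊢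
        have h1c : (0:ℝ) ≤ 1 / c₁ := by positivity
        linarith
    calc Metric.diam (((fun y : Eu n => sAvg⁻¹ • (y - c)) '' K) ∪
          Metric.closedBall (0 : Eu n) 1)
        ≤ Metric.diam (Metric.closedBall (0 : Eu n) (1 + 1 / c₁)) :=
          Metric.diam_mono hsub Metric.isBounded_closedBall
      _ ≤ 2 * (1 + 1 / c₁) := Metric.diam_closedBall (le_of_lt (by positivity))
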